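/- Every finite poset with boolean dimension at most 2 has dimension at most 2; consequently, boolean dimension 2 and dimension 2 are equivalent. -/
import Mathlib


/-- `L` is a realizer of the order `le`: a family of linear extensions of `le`
whose intersection is `le`. -/
def IsRealizer {X : Type*} (le : X → X → Prop) {d : ℕ} (L : Fin d → X → X → Prop) : Prop :=
  (∀ i, IsLinearOrder X (L i)) ∧ (∀ (i) (x y : X), le x y → L i x y) ∧
    (∀ x y : X, le x y ↔ ∀ i, L i x y)

/-- The (Dushnik–Miller) dimension of a poset: the least size of a realizer. -/
noncomputable def orderDim (X : Type*) [PartialOrder X] : ℕ :=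
  sInf {d : ℕ | ∃ L : Fin d → X → X → Prop, IsRealizer (· ≤ ·) L}

/-- `L` together with the boolean function `φ` is a boolean realizer of `le`. -/
def IsBooleanRealizer {X : Type*} (le : X → X → Prop) {d : ℕ}
    (L : Fin d → X → X → Prop) (φ : (Fin d → Prop) → Prop) : Prop :=
  (∀ i, IsLinearOrder X (L i)) ∧ ∀ x y : X, le x y ↔ φ (fun i => L i x y)

/-- Boolean dimension of a relation. -/
noncomputable def booleanDimRel {X : Type*} (le : X → X → Prop) : ℕ :=
  sInf {d : ℕ | ∃ (L : Fin d → X → X → Prop) (φ : (Fin d → Prop) → Prop),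
    IsBooleanRealizer le L φ}

/-- Boolean dimension of a poset. -/
noncomputable def booleanDim (X : Type*) [PartialOrder X] : ℕ :=
  booleanDimRel ((· ≤ ·) : X → X → Prop)

/-- A partial linear extension of `le`: a linear order on a subset of `X`
extending the restriction of `le` to that subset. -/
structure PLE {X : Type*} (le : X → X → Prop) where
  dom : Set X
  rel : X → X → Prop
  mem_left : ∀ x y, rel x y → x ∈ dom
  mem_right : ∀ x y, rel x y → y ∈ dom
  refl : ∀ x ∈ dom, rel x x
  antisymm : ∀ x y, rel x y → rel y x → x = y
  trans : ∀ x y z, rel x y → rel y z → rel x z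
  total : ∀ x ∈ dom, ∀ y ∈ dom, rel x y ∨ rel y x
  le_imp : ∀ x ∈ dom, ∀ y ∈ dom, le x y → rel x y

/-- A family of partial linear extensions is a local realizer of `le`:
`x ≤ y` iff no member reverses the pair strictly. -/
def IsLocalRealizer {X : Type*} {le : X → X → Prop} {ι : Type*} (L : ι → PLE le) : Prop :=
  ∀ x y : X, le x y ↔ ∀ i, ¬ ((L i).rel y x ∧ y ≠ x)

/-- Every element of `X` occurs in the domain of at most `d` members of the family. -/
def WidthAtMost {X : Type*} {le : X → X → Prop} {ι : Type*} (L : ι → PLE le) (d : ℕ) : Prop :=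
  ∀ x : X, ({i : ι | x ∈ (L i).dom}).ncard ≤ d

/-- Local dimension of a poset: the least width of a local realizer. -/
noncomputable def localDim (X : Type*) [PartialOrder X] : ℕ :=
  sInf {d : ℕ | ∃ (t : ℕ) (L : Fin t → PLE ((· ≤ ·) : X → X → Prop)),
    IsLocalRealizer L ∧ WidthAtMost L d}

lemma realizer_of_conj {X : Type*} [PartialOrder X] (A B : X → X → Prop)
    (hA : IsLinearOrder X A) (hB : IsLinearOrder X B)
    (h : ∀ x y : X, x ≤ y ↔ A x y ∧ B x y) :
    IsRealizer (· ≤ ·) ![A, B] := by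
  refine ⟨fun i => ?_, fun i x y hxy => ?_, fun x y => ?_⟩
  · fin_cases i
    · simpa using hA
    · simpa using hB
  · fin_cases i
    · simpa using ((h x y).mp hxy).1
    · simpa using ((h x y).mp hxy).2
  · show x ≤ y ↔ ∀ i, ![A, B] i x y
    rw [h x y, Fin.forall_fin_two]
    simp

lemma b2o_zero {X : Type*} [PartialOrder X] (L : Fin 0 → X → X → Prop)
    (φ : (Fin 0 → Prop) → Prop) (hb : IsBooleanRealizer (· ≤ ·) L φ) :
    ∃ M : Fin 0 → X → X → Prop, IsRealizer (· ≤ ·) M := by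
  obtain ⟨-, h⟩ := hb
  replace h : ∀ x y : X, x ≤ y ↔ φ (fun i => L i x y) := h
  have hall : ∀ x y : X, x ≤ y := by
    intro x y
    have e : (fun i : Fin 0 => L i x y) = (fun i : Fin 0 => L i x x) := by
      funext i; exact i.elim0
    rw [h x y, e, ← h x x]
  exact ⟨fun i => i.elim0, fun i => i.elim0, fun i => i.elim0,
    fun x y => ⟨fun _ i => i.elim0, fun _ => hall x y⟩⟩

lemma b2o_one {X : Type*} [PartialOrder X] (L : Fin 1 → X → X → Prop)
    (φ : (Fin 1 → Prop) → Prop) (hb : IsBooleanRealizer (· ≤ ·) L φ) :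
    ∃ d' ≤ 1, ∃ M : Fin d' → X → X → Prop, IsRealizer (· ≤ ·) M := by
  obtain ⟨hlin, h⟩ := hb
  replace h : ∀ x y : X, x ≤ y ↔ φ (fun i => L i x y) := h
  haveI I0 : IsLinearOrder X (L 0) := hlin 0
  have key : ∀ (x y : X) (a : Prop), L 0 x y = a → (x ≤ y ↔ φ (fun _ => a)) := by
    intro x y a ha
    rw [h x y]
    have e : (fun i : Fin 1 => L i x y) = (fun _ => a) := by
      funext i
      have hi : i = 0 := Subsingleton.elim i 0
      rw [hi, ha]
    rw [e]
  have pT : ∀ _x : X, φ (fun _ => True) := fun x =>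
    (key x x True (eq_true (refl_of (L 0) x))).mp le_rfl
  by_cases pF : φ (fun _ => False)
  · have hall : ∀ x y : X, x ≤ y := by
      intro x y
      by_cases h1 : L 0 x y
      · exact (key x y True (eq_true h1)).mpr (pT x)
      · exact (key x y False (eq_false h1)).mpr pF
    exact ⟨0, by norm_num, fun i => i.elim0, fun i => i.elim0, fun i => i.elim0,
      fun x y => ⟨fun _ i => i.elim0, fun _ => hall x y⟩⟩
  · have hiff : ∀ x y : X, x ≤ y ↔ L 0 x y := by
      intro x y
      by_cases h1 : L 0 x y
      · exact iff_of_true ((key x y True (eq_true h1)).mpr (pT x)) h1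
      · exact iff_of_false (fun hle => pF ((key x y False (eq_false h1)).mp hle)) h1
    refine ⟨1, le_refl 1, ![L 0], fun i => ?_, fun i x y hxy => ?_, fun x y => ?_⟩
    · fin_cases i; simpa using I0
    · fin_cases i; simpa using (hiff x y).mp hxy
    · show x ≤ y ↔ ∀ i, ![L 0] i x y
      rw [hiff]
      constructor
      · intro h1 i; fin_cases i; simpa using h1
      · intro hi; simpa using hi 0

lemma b2o_two {X : Type*} [PartialOrder X] (L : Fin 2 → X → X → Prop)
    (φ : (Fin 2 → Prop) → Prop) (hb : IsBooleanRealizer (· ≤ ·) L φ) :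
    ∃ M : Fin 2 → X → X → Prop, IsRealizer (· ≤ ·) M := by
  obtain ⟨hlin, h⟩ := hb
  replace h : ∀ x y : X, x ≤ y ↔ φ (fun i => L i x y) := h
  haveI I0 : IsLinearOrder X (L 0) := hlin 0
  haveI I1 : IsLinearOrder X (L 1) := hlin 1
  have key : ∀ (x y : X) (a b : Prop), L 0 x y = a → L 1 x y = b → (x ≤ y ↔ φ ![a, b]) := by
    intro x y a b ha hb'
    rw [h x y]
    have e : (fun i => L i x y) = ![a, b] := by
      funext i
      fin_cases i
      · simpa using ha
      · simpa using hb'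
    rw [e]
  have pTT : ∀ x : X, φ ![True, True] := fun x =>
    (key x x True True (eq_true (refl_of (L 0) x)) (eq_true (refl_of (L 1) x))).mp le_rfl
  have rev : ∀ (i : Fin 2) (x y : X), x ≠ y → L i x y → ¬ L i y x := by
    intro i x y hne hxy hyx
    haveI := hlin i
    exact hne (antisymm hxy hyx)
  have tot : ∀ (i : Fin 2) (x y : X), ¬ L i x y → L i y x := by
    intro i x y hn
    haveI := hlin i
    exact (total_of (L i) x y).resolve_left hn
  by_cases pTF : φ ![True, False]
  · have hiff : ∀ x y : X, x ≤ y ↔ L 0 x y := by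
      intro x y
      by_cases hxy : x = y
      · subst hxy; exact iff_of_true le_rfl (refl_of (L 0) x)
      · by_cases h1 : L 0 x y <;> by_cases h2 : L 1 x y
        · exact iff_of_true ((key x y True True (eq_true h1) (eq_true h2)).mpr (pTT x)) h1
        · exact iff_of_true ((key x y True False (eq_true h1) (eq_false h2)).mpr pTF) h1
        · have hyx : y ≤ x := (key y x True False (eq_true (tot 0 x y h1))
            (eq_false (rev 1 x y hxy h2))).mpr pTF
          exact iff_of_false (fun hle => hxy (le_antisymm hle hyx)) h1
        · have hyx : y ≤ x := (key y x True True (eq_true (tot 0 x y h1))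
            (eq_true (tot 1 x y h2))).mpr (pTT y)
          exact iff_of_false (fun hle => hxy (le_antisymm hle hyx)) h1
    exact ⟨![L 0, L 0], realizer_of_conj (L 0) (L 0) I0 I0
      (fun x y => by rw [and_self]; exact hiff x y)⟩
  · by_cases pFT : φ ![False, True]
    · have hiff : ∀ x y : X, x ≤ y ↔ L 1 x y := by
        intro x y
        by_cases hxy : x = y
        · subst hxy; exact iff_of_true le_rfl (refl_of (L 1) x)
        · by_cases h1 : L 0 x y <;> by_cases h2 : L 1 x y
          · exact iff_of_true ((key x y True True (eq_true h1) (eq_true h2)).mpr (pTT x)) h2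
          · have hyx : y ≤ x := (key y x False True (eq_false (rev 0 x y hxy h1))
              (eq_true (tot 1 x y h2))).mpr pFT
            exact iff_of_false (fun hle => hxy (le_antisymm hle hyx)) h2
          · exact iff_of_true ((key x y False True (eq_false h1) (eq_true h2)).mpr pFT) h2
          · have hyx : y ≤ x := (key y x True True (eq_true (tot 0 x y h1))
              (eq_true (tot 1 x y h2))).mpr (pTT y)
            exact iff_of_false (fun hle => hxy (le_antisymm hle hyx)) h2
      exact ⟨![L 1, L 1], realizer_of_conj (L 1) (L 1) I1 I1
        (fun x y => by rw [and_self]; exact hiff x y)⟩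
    · have hiff : ∀ x y : X, x ≤ y ↔ L 0 x y ∧ L 1 x y := by
        intro x y
        by_cases hxy : x = y
        · subst hxy
          exact iff_of_true le_rfl ⟨refl_of (L 0) x, refl_of (L 1) x⟩
        · by_cases h1 : L 0 x y <;> by_cases h2 : L 1 x y
          · exact iff_of_true ((key x y True True (eq_true h1) (eq_true h2)).mpr (pTT x)) ⟨h1, h2⟩
          · exact iff_of_false
              (fun hle => pTF ((key x y True False (eq_true h1) (eq_false h2)).mp hle))
              (fun hc => h2 hc.2)
          · exact iff_of_false
              (fun hle => pFT ((key x y False True (eq_false h1) (eq_true h2)).mp hle))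
              (fun hc => h1 hc.1)
          · have hyx : y ≤ x := (key y x True True (eq_true (tot 0 x y h1))
              (eq_true (tot 1 x y h2))).mpr (pTT y)
            exact iff_of_false (fun hle => hxy (le_antisymm hle hyx)) (fun hc => h1 hc.1)
      exact ⟨![L 0, L 1], realizer_of_conj (L 0) (L 1) I0 I1 hiff⟩

/-- Every finite poset with boolean dimension at most 2 has dimension
at most 2; consequently, boolean dimension 2 and dimension 2 are equivalent. -/
theorem boolean_dim_two_iff_dim_two (X : Type*) [PartialOrder X] [Fintype X] :
    (booleanDim X ≤ 2 → orderDim X ≤ 2) ∧ (booleanDim X = 2 ↔ orderDim X = 2) := by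
  classical
  set BS : Set ℕ := {d : ℕ | ∃ (L : Fin d → X → X → Prop) (φ : (Fin d → Prop) → Prop),
    IsBooleanRealizer (· ≤ ·) L φ} with hBSdef
  set OS : Set ℕ := {d : ℕ | ∃ L : Fin d → X → X → Prop, IsRealizer (· ≤ ·) L} with hOSdef
  have hbdim : booleanDim X = sInf BS := rfl
  have hodim : orderDim X = sInf OS := rfl
  have hsub : OS ⊆ BS := by
    rintro d ⟨L, hL⟩
    exact ⟨L, fun v => ∀ i, v i, hL.1, hL.2.2⟩
  have hb2o : ∀ d ∈ BS, d ≤ 2 → ∃ d' ∈ OS, d' ≤ d := by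
    rintro d ⟨L, φ, hb⟩ hd
    rcases d with - | d
    · exact ⟨0, b2o_zero L φ hb, le_refl _⟩
    rcases d with - | d
    · obtain ⟨d', hd', M, hM⟩ := b2o_one L φ hb
      exact ⟨d', ⟨M, hM⟩, hd'⟩
    rcases d with - | d
    · exact ⟨2, b2o_two L φ hb, le_refl _⟩
    · omega
  constructor
  · intro hble
    rw [hbdim] at hble
    by_cases hne : BS.Nonempty
    · obtain ⟨d', hd'OS, hd'le⟩ := hb2o _ (Nat.sInf_mem hne) hble
      rw [hodim]
      exact (Nat.sInf_le hd'OS).trans (hd'le.trans hble)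
    · have hOSe : ¬ OS.Nonempty := fun ⟨d, hd⟩ => hne ⟨d, hsub hd⟩
      rw [hodim, Set.not_nonempty_iff_eq_empty.mp hOSe, Nat.sInf_empty]
      omega
  · constructor
    · intro hb2
      rw [hbdim] at hb2
      have hne : BS.Nonempty := by
        by_contra hc
        rw [Set.not_nonempty_iff_eq_empty.mp hc, Nat.sInf_empty] at hb2
        exact absurd hb2 (by norm_num)
      obtain ⟨d', hd'OS, hd'le⟩ := hb2o _ (Nat.sInf_mem hne) (by omega)
      have hOSne : OS.Nonempty := ⟨d', hd'OS⟩
      have hole : sInf OS ≤ 2 := (Nat.sInf_le hd'OS).trans (by omega)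
      have hmem : sInf OS ∈ OS := Nat.sInf_mem hOSne
      have hbo : sInf BS ≤ sInf OS := Nat.sInf_le (hsub hmem)
      rw [hodim]
      omega
    · intro ho2
      rw [hodim] at ho2
      have hOSne : OS.Nonempty := by
        by_contra hc
        rw [Set.not_nonempty_iff_eq_empty.mp hc, Nat.sInf_empty] at ho2
        exact absurd ho2 (by norm_num)
      have hmem : sInf OS ∈ OS := Nat.sInf_mem hOSne
      have hble : sInf BS ≤ 2 := (Nat.sInf_le (hsub hmem)).trans (le_of_eq ho2)
      have hBSne : BS.Nonempty := ⟨sInf OS, hsub hmem⟩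
      obtain ⟨d', hd'OS, hd'le⟩ := hb2o _ (Nat.sInf_mem hBSne) hble
      have h2 : sInf OS ≤ d' := Nat.sInf_le hd'OS
      rw [hbdim]
      omega
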